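/- Let P = (G, T, loss, S) be a learning problem where every GNN in S has at most d ∈ ℕ∞ layers, and let ρ be a d-substitution on G. Then for every GNN L ∈ S, Σ_{v ∈ T} loss(v, L(G)(v)) = Σ_{v ∈ T/ρ} (loss/ρ)(v, L(G/ρ)(v)); that is, P and P/ρ are equivalent learning problems. -/

import Mathlib

open Classical

/-- The multiset of incoming neighbors of `v` in the multigraph with edge
multiplicity function `E` (with `E w v` the multiplicity of edge `w → v`). -/
def inc {V : Type*} [Fintype V] (E : V → V → ℕ) (v : V) : Multiset V :=
  Finset.univ.val.bind fun w => Multiset.replicate (E w v) w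

/-- Cap all multiplicities of a multiset at `c ∈ ℕ∞`. -/
noncomputable def capM {α : Type*} (c : ℕ∞) (M : Multiset α) : Multiset α :=
  letI := Classical.decEq α
  M.toFinset.val.bind fun x => Multiset.replicate ((min (M.count x : ℕ∞) c).toNat) x

/-- The type of colors obtained after `d` steps of color refinement, starting
from base colors in `Y`: a depth-`d` color is the previous color paired with the
multiset of previous colors of the incoming neighbors. -/
def CRt (Y : Type*) : ℕ → Type _
  | 0 => Y
  | (d+1) => CRt Y d × Multiset (CRt Y d)

/-- `d` steps of color refinement, starting from base coloring `g`. -/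
def colr {V : Type*} [Fintype V] {Y : Type*} (E : V → V → ℕ) (g : V → Y) :
    (d : ℕ) → V → CRt Y d
  | 0 => g
  | (d+1) => fun v => (colr E g d v, (inc E v).map (colr E g d))

/-- `d` steps of `c`-graded color refinement. -/
noncomputable def colrC {V : Type*} [Fintype V] {Y : Type*} (c : ℕ∞) (E : V → V → ℕ)
    (g : V → Y) : (d : ℕ) → V → CRt Y d
  | 0 => g
  | (d+1) => fun v => (colrC c E g d v, capM c ((inc E v).map (colrC c E g d)))

/-- The partition induced by `d` refinement steps is stable at `d`. -/
def stableAt {V : Type*} [Fintype V] {Y : Type*} (E : V → V → ℕ) (g : V → Y) (d : ℕ) : Prop :=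
  ∀ v w : V, colr E g d v = colr E g d w ↔ colr E g (d+1) v = colr E g (d+1) w

/-- The stable coloring number: least depth at which color refinement stabilizes. -/
noncomputable def stableNum {V : Type*} [Fintype V] {Y : Type*} (E : V → V → ℕ) (g : V → Y) : ℕ :=
  sInf { d | stableAt E g d }

/-- The stable coloring `colr^∞`. -/
noncomputable def colrInf {V : Type*} [Fintype V] {Y : Type*} (E : V → V → ℕ) (g : V → Y) :
    V → CRt Y (stableNum E g) :=
  colr E g (stableNum E g)

/-- The depth (number of refinement rounds) corresponding to `d ∈ ℕ∞`:
for `d = ∞` it is the stable coloring number of the graph. -/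
noncomputable def edepth {V : Type*} [Fintype V] {Y : Type*} (E : V → V → ℕ) (g : V → Y)
    (d : ℕ∞) : ℕ :=
  WithTop.untopD (stableNum E g) d

/-- Color refinement with depth `d ∈ ℕ∞` (stable coloring for `d = ∞`). -/
noncomputable def colrE' {V : Type*} [Fintype V] {Y : Type*} (E : V → V → ℕ) (g : V → Y)
    (d : ℕ∞) : V → CRt Y (edepth E g d) :=
  colr E g (edepth E g d)

/-- A substitution choosing one representative per class of the coloring `col`:
`ρ v` is in the class of `v`, and `ρ` is constant on classes. -/
def IsSubstWith {V : Type*} {C : Type*} (col : V → C) (ρ : V → V) : Prop :=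
  (∀ v, col (ρ v) = col v) ∧ ∀ v w, col v = col w → ρ v = ρ w

/-- Node set of the reduction: the chosen representatives. -/
def RNodes {V : Type*} (ρ : V → V) : Type _ := { v : V // ∃ u, ρ u = v }

noncomputable instance {V : Type*} [Fintype V] (ρ : V → V) : Fintype (RNodes ρ) := by
  unfold RNodes; exact Subtype.fintype _

instance {V : Type*} [DecidableEq V] (ρ : V → V) : DecidableEq (RNodes ρ) := by
  unfold RNodes; infer_instance

/-- Edge multiplicities of the reduction: `E'(v → w) = Σ_{v' ∈ [v]} E(v' → w)`. -/
noncomputable def reductE {V : Type*} [Fintype V] {C : Type*} (E : V → V → ℕ) (col : V → C)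
    (ρ : V → V) (a b : RNodes ρ) : ℕ :=
  ∑ v' ∈ Finset.univ.filter (fun v' => col v' = col a.val), E v' b.val

/-- Edge multiplicities of the `c`-graded reduction:
`E'(v → w) = min(Σ_{v' ∈ [v]} min(E(v' → w), c), c)`. -/
noncomputable def reductEC {V : Type*} [Fintype V] {C : Type*} (c : ℕ∞) (E : V → V → ℕ)
    (col : V → C) (ρ : V → V) (a b : RNodes ρ) : ℕ :=
  (min (↑(∑ v' ∈ Finset.univ.filter (fun v' => col v' = col a.val),
      (min (E v' b.val : ℕ∞) c).toNat) : ℕ∞) c).toNat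

/-- Coloring of the reduction: colors are inherited. -/
def reductG {V : Type*} {Y : Type*} (g : V → Y) (ρ : V → V) (a : RNodes ρ) : Y := g a.val

/-- A GNN layer of input dimension `p` and output dimension `q`. -/
structure GNNLayer (p q : ℕ) where
  h : ℕ
  agg : Multiset (Fin p → ℝ) → (Fin h → ℝ)
  comb : (Fin p → ℝ) → (Fin h → ℝ) → (Fin q → ℝ)

/-- The feature map transformer computed by a GNN layer. -/
def GNNLayer.apply {p q : ℕ} (L : GNNLayer p q) {V : Type*} [Fintype V]
    (E : V → V → ℕ) (g : V → Fin p → ℝ) : V → Fin q → ℝ :=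
  fun v => L.comb (g v) (L.agg ((inc E v).map g))

/-- A GNN: a nonempty sequence of layers with matching dimensions. -/
inductive GNN : ℕ → ℕ → Type
  | single : ∀ {p q}, GNNLayer p q → GNN p q
  | cons : ∀ {p r q}, GNNLayer p r → GNN r q → GNN p q

/-- Number of layers of a GNN. -/
def GNN.depth : ∀ {p q}, GNN p q → ℕ
  | _, _, .single _ => 1
  | _, _, .cons _ rest => rest.depth + 1

/-- The feature map transformer computed by a GNN. -/
def GNN.apply {V : Type*} [Fintype V] : ∀ {p q}, GNN p q → (V → V → ℕ) →
    (V → Fin p → ℝ) → V → Fin q → ℝ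
  | _, _, .single L, E, g => L.apply E g
  | _, _, .cons L rest, E, g => rest.apply E (L.apply E g)

/-- A GNN layer has width `c` if its aggregation only depends on multiplicities up to `c`. -/
def GNNLayer.HasWidth {p q : ℕ} (c : ℕ∞) (L : GNNLayer p q) : Prop :=
  ∀ M, L.agg M = L.agg (capM c M)

/-- A GNN has width `c` if all its layers do. -/
def GNN.HasWidth (c : ℕ∞) : ∀ {p q}, GNN p q → Prop
  | _, _, .single L => L.HasWidth c
  | _, _, .cons L rest => L.HasWidth c ∧ rest.HasWidth c


/-! ### Auxiliary lemmas -/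

section Aux

/-- Multiset mapping lemma: if `f1`-images match `f2`-images, and matching
`f`-values force matching `h`-values, then `h`-images match too. -/
lemma aux_map_rel {α β γ δ : Type*} (f1 : α → γ) (f2 : β → γ) (h1 : α → δ) (h2 : β → δ)
    (H : ∀ a b, f1 a = f2 b → h1 a = h2 b) :
    ∀ (M : Multiset α) (N : Multiset β), M.map f1 = N.map f2 → M.map h1 = N.map h2 := by
  classical
  intro M
  induction M using Multiset.induction with
  | empty =>
    intro N h
    rw [Multiset.map_zero] at h
    rw [eq_comm, Multiset.map_eq_zero] at h
    subst h
    simp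
  | cons a M ih =>
    intro N h
    rw [Multiset.map_cons] at h
    have hm : f1 a ∈ N.map f2 := by rw [← h]; exact Multiset.mem_cons_self _ _
    rcases Multiset.mem_map.1 hm with ⟨b, hbN, hfb⟩
    have hN : b ::ₘ N.erase b = N := Multiset.cons_erase hbN
    rw [← hN, Multiset.map_cons, hfb, Multiset.cons_inj_right] at h
    rw [← hN, Multiset.map_cons, Multiset.map_cons, ih _ h, H a b hfb.symm]

variable {V : Type*} [Fintype V] {V2 : Type*} [Fintype V2] {Y : Type*}

/-- One-step downward monotonicity of color refinement, across two graphs. -/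
lemma colr_down {E1 : V → V → ℕ} {E2 : V2 → V2 → ℕ} {g1 : V → Y} {g2 : V2 → Y}
    {k : ℕ} {v1 : V} {v2 : V2}
    (h : colr E1 g1 (k+1) v1 = colr E2 g2 (k+1) v2) :
    colr E1 g1 k v1 = colr E2 g2 k v2 :=
  congrArg (Prod.fst : CRt Y k × Multiset (CRt Y k) → CRt Y k) h

lemma colr_snd {E1 : V → V → ℕ} {E2 : V2 → V2 → ℕ} {g1 : V → Y} {g2 : V2 → Y}
    {k : ℕ} {v1 : V} {v2 : V2}
    (h : colr E1 g1 (k+1) v1 = colr E2 g2 (k+1) v2) :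
    (inc E1 v1).map (colr E1 g1 k) = (inc E2 v2).map (colr E2 g2 k) :=
  congrArg (Prod.snd : CRt Y k × Multiset (CRt Y k) → Multiset (CRt Y k)) h

/-- Downward monotonicity of color refinement, across two graphs. -/
lemma colr_le {E1 : V → V → ℕ} {E2 : V2 → V2 → ℕ} {g1 : V → Y} {g2 : V2 → Y}
    {v1 : V} {v2 : V2} :
    ∀ k j, j ≤ k → colr E1 g1 k v1 = colr E2 g2 k v2 → colr E1 g1 j v1 = colr E2 g2 j v2 := by
  intro k
  induction k with
  | zero =>
    intro j hj h
    obtain rfl : j = 0 := Nat.le_zero.1 hj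
    exact h
  | succ k ih =>
    intro j hj h
    rcases Nat.eq_or_lt_of_le hj with rfl | hlt
    · exact h
    · exact ih j (Nat.lt_succ_iff.1 hlt) (colr_down h)

/-- One layer of a GNN preserves color refinement equalities, dropping depth by one. -/
lemma layer_colr {p r : ℕ} (L : GNNLayer p r) (E1 : V → V → ℕ) (E2 : V2 → V2 → ℕ)
    (g1 : V → Fin p → ℝ) (g2 : V2 → Fin p → ℝ) :
    ∀ j (v1 : V) (v2 : V2), colr E1 g1 (j+1) v1 = colr E2 g2 (j+1) v2 →
      colr E1 (L.apply E1 g1) j v1 = colr E2 (L.apply E2 g2) j v2 := by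
  intro j
  induction j with
  | zero =>
    intro v1 v2 h
    have h1 : g1 v1 = g2 v2 := colr_down h
    have h2 : (inc E1 v1).map g1 = (inc E2 v2).map g2 := colr_snd h
    show L.apply E1 g1 v1 = L.apply E2 g2 v2
    unfold GNNLayer.apply
    rw [h1, h2]
  | succ j ih =>
    intro v1 v2 h
    have h1 : colr E1 g1 (j+1) v1 = colr E2 g2 (j+1) v2 := colr_down h
    have h2 : (inc E1 v1).map (colr E1 g1 (j+1)) = (inc E2 v2).map (colr E2 g2 (j+1)) :=
      colr_snd h
    show (colr E1 (L.apply E1 g1) j v1, (inc E1 v1).map (colr E1 (L.apply E1 g1) j)) =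
      (colr E2 (L.apply E2 g2) j v2, (inc E2 v2).map (colr E2 (L.apply E2 g2) j))
    rw [ih v1 v2 h1, aux_map_rel _ _ _ _ ih _ _ h2]

/-- A GNN of depth `k` computes a function of the depth-`k` refined colors. -/
lemma gnn_apply_eq : ∀ {p q : ℕ} (L : GNN p q) (E1 : V → V → ℕ) (E2 : V2 → V2 → ℕ)
    (g1 : V → Fin p → ℝ) (g2 : V2 → Fin p → ℝ) (v1 : V) (v2 : V2),
    colr E1 g1 L.depth v1 = colr E2 g2 L.depth v2 →
      L.apply E1 g1 v1 = L.apply E2 g2 v2 := by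
  intro p q L
  induction L with
  | single L =>
    intro E1 E2 g1 g2 v1 v2 h
    have h1 : g1 v1 = g2 v2 := colr_down h
    have h2 : (inc E1 v1).map g1 = (inc E2 v2).map g2 := colr_snd h
    show L.apply E1 g1 v1 = L.apply E2 g2 v2
    unfold GNNLayer.apply
    rw [h1, h2]
  | cons L rest ih =>
    intro E1 E2 g1 g2 v1 v2 h
    exact ih _ _ _ _ _ _ (layer_colr L E1 E2 g1 g2 rest.depth v1 v2 h)

/-- Stability propagates one step up. -/
lemma stableAt_succ {E : V → V → ℕ} {g : V → Y} {m : ℕ} (h : stableAt E g m) :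
    stableAt E g (m+1) := by
  intro v w
  constructor
  · intro hvw
    have h1 : colr E g m v = colr E g m w := colr_down hvw
    have h2 : (inc E v).map (colr E g m) = (inc E w).map (colr E g m) := colr_snd hvw
    show (colr E g (m+1) v, (inc E v).map (colr E g (m+1))) =
      (colr E g (m+1) w, (inc E w).map (colr E g (m+1)))
    rw [hvw, aux_map_rel _ _ _ _ (fun a b hab => (h a b).1 hab) _ _ h2]
  · exact colr_down

lemma stableAt_mono {E : V → V → ℕ} {g : V → Y} {m : ℕ} (h : stableAt E g m) :
    ∀ j, stableAt E g (m + j) := by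
  intro j
  induction j with
  | zero => exact h
  | succ j ih => exact stableAt_succ ih

/-- At a stable depth, the coloring determines the coloring at every depth. -/
lemma stable_det {E : V → V → ℕ} {g : V → Y} {m : ℕ} (h : stableAt E g m) :
    ∀ k (v w : V), colr E g m v = colr E g m w → colr E g k v = colr E g k w := by
  have key : ∀ j (v w : V), colr E g m v = colr E g m w →
      colr E g (m + j) v = colr E g (m + j) w := by
    intro j
    induction j with
    | zero => intro v w hvw; exact hvw
    | succ j ih => intro v w hvw; exact (stableAt_mono h j v w).1 (ih v w hvw)
  intro k v w hvw
  rcases le_or_gt k m with hk | hk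
  · exact colr_le m k hk hvw
  · have : k = m + (k - m) := by omega
    rw [this]
    exact key (k - m) v w hvw

/-- Color refinement stabilizes on a finite graph. -/
lemma exists_stableAt (E : V → V → ℕ) (g : V → Y) : ∃ m, stableAt E g m := by
  classical
  by_contra hc
  push_neg at hc
  set k : ℕ → ℕ := fun m => (Finset.univ.image (colr E g m)).card with hk
  have hfst : ∀ m, Finset.univ.image (colr E g m) =
      (Finset.univ.image (colr E g (m+1))).image
        (Prod.fst : CRt Y m × Multiset (CRt Y m) → CRt Y m) := by
    intro m
    apply Finset.ext
    intro c
    simp only [Finset.mem_image, Finset.mem_univ, true_and]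
    constructor
    · rintro ⟨v, rfl⟩
      exact Finset.mem_image.2 ⟨colr E g (m+1) v, Finset.mem_image_of_mem (β := CRt Y (m+1)) _ (Finset.mem_univ v), rfl⟩
    · intro hc'
      obtain ⟨x, hx, rfl⟩ := Finset.mem_image.1 hc'
      obtain ⟨v, -, rfl⟩ := (Finset.mem_image (β := CRt Y (m+1))).1 hx
      exact ⟨v, rfl⟩
  have hstab : ∀ m, k (m+1) ≤ k m → stableAt E g m := by
    intro m hle
    have hcard : ((Finset.univ.image (colr E g (m+1))).image
        (Prod.fst : CRt Y m × Multiset (CRt Y m) → CRt Y m)).card =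
        (Finset.univ.image (colr E g (m+1))).card := by
      apply le_antisymm (Finset.card_image_le)
      rw [← hfst]
      exact hle
    have hinj := Finset.injOn_of_card_image_eq hcard
    intro v w
    constructor
    · intro hvw
      apply hinj (by exact Finset.mem_coe.2 (Finset.mem_image_of_mem (β := CRt Y (m+1)) _ (Finset.mem_univ v))) (by exact Finset.mem_coe.2 (Finset.mem_image_of_mem (β := CRt Y (m+1)) _ (Finset.mem_univ w)))
      exact hvw
    · exact colr_down
  have hlt : ∀ m, k m < k (m+1) := by
    intro m
    by_contra hle
    exact hc m (hstab m (Nat.le_of_not_lt hle))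
  have hmono : StrictMono k := strictMono_nat_of_lt_succ hlt
  have hbound : ∀ m, k m ≤ Fintype.card V := by
    intro m
    calc k m ≤ Finset.univ.card := Finset.card_image_le
    _ = Fintype.card V := rfl
  have h1 := hmono.le_apply (x := Fintype.card V + 1)
  have h2 := hbound (Fintype.card V + 1)
  omega

lemma sum_replicate_eq {α β : Type*} (s : Finset α) (f : α → ℕ) (x : β) :
    ∑ u ∈ s, Multiset.replicate (f u) x = Multiset.replicate (∑ u ∈ s, f u) x := by
  classical
  induction s using Finset.induction with
  | empty => simp
  | insert _ _ hnotmem ih =>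
    rw [Finset.sum_insert hnotmem, Finset.sum_insert hnotmem, ih, Multiset.replicate_add]

lemma bind_univ_eq_sum {α : Type*} [Fintype α] {β : Type*} (f : α → Multiset β) :
    Finset.univ.val.bind f = ∑ a : α, f a := by
  rw [Finset.sum, Multiset.bind, Multiset.join]

omit [Fintype V] in
/-- A node lies in the fiber of representative `b` iff it has `b`'s color. -/
lemma subst_fiber {C : Type*} {col : V → C} {ρ : V → V}
    (hρ : IsSubstWith col ρ) :
    ∀ b : RNodes ρ, ∀ u : V,
      (⟨ρ u, u, rfl⟩ : RNodes ρ) = b ↔ col u = col b.val := by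
  intro b u
  constructor
  · intro hub
    have : ρ u = b.val := congrArg Subtype.val hub
    rw [← this]
    exact (hρ.1 u).symm
  · intro hcol
    rcases b.property with ⟨w, hw⟩
    apply Subtype.ext
    show ρ u = b.val
    rw [← hw]
    apply hρ.2
    rw [hcol, ← hw]
    exact hρ.1 w

/-- The colors of the reduct agree with the original colors, up to depth `K`,
provided the base coloring determines colors up to depth `K`. -/
lemma reduct_colr {E : V → V → ℕ} {g : V → Y} {n : ℕ} {ρ : V → V} {K : ℕ}
    (hρ : IsSubstWith (colr E g n) ρ)
    (det : ∀ k ≤ K, ∀ v w : V, colr E g n v = colr E g n w → colr E g k v = colr E g k w) :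
    ∀ k ≤ K, ∀ a : RNodes ρ,
      colr (reductE E (colr E g n) ρ) (reductG g ρ) k a = colr E g k a.val := by
  classical
  have hfib := subst_fiber hρ
  intro k
  induction k with
  | zero => intro _ a; rfl
  | succ k ih =>
    intro hkK a
    have ihk := ih (Nat.le_of_succ_le hkK)
    show (colr (reductE E (colr E g n) ρ) (reductG g ρ) k a,
        (inc (reductE E (colr E g n) ρ) a).map (colr (reductE E (colr E g n) ρ) (reductG g ρ) k)) =
      (colr E g k a.val, (inc E a.val).map (colr E g k))
    rw [ihk a]
    congr 1
    -- the multiset of neighbor colors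
    have hmap : (inc (reductE E (colr E g n) ρ) a).map
        (colr (reductE E (colr E g n) ρ) (reductG g ρ) k) =
        (inc (reductE E (colr E g n) ρ) a).map (fun b => colr E g k b.val) :=
      Multiset.map_congr rfl (fun b _ => ihk b)
    rw [hmap]
    unfold inc
    rw [Multiset.map_bind, Multiset.map_bind, bind_univ_eq_sum, bind_univ_eq_sum]
    simp only [Multiset.map_replicate]
    rw [← Finset.sum_fiberwise_of_maps_to
      (t := (Finset.univ : Finset (RNodes ρ)))
      (g := fun u : V => (⟨ρ u, u, rfl⟩ : RNodes ρ))
      (fun u _ => Finset.mem_univ _)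
      (fun u => Multiset.replicate (E u a.val) (colr E g k u))]
    apply Finset.sum_congr rfl
    intro b _
    have hfilter : Finset.univ.filter (fun u : V => (⟨ρ u, u, rfl⟩ : RNodes ρ) = b) =
        Finset.univ.filter (fun u : V => colr E g n u = colr E g n b.val) := by
      apply Finset.filter_congr
      intro u _
      simp only [hfib b u]
    have hcolor : ∀ u ∈ Finset.univ.filter (fun u : V => (⟨ρ u, u, rfl⟩ : RNodes ρ) = b),
        colr E g k u = colr E g k b.val := by
      intro u hu
      rw [Finset.mem_filter] at hu
      exact det k (Nat.le_of_succ_le hkK) u b.val ((hfib b u).1 hu.2)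
    symm
    calc _
        = ∑ u ∈ Finset.univ.filter (fun u : V => (⟨ρ u, u, rfl⟩ : RNodes ρ) = b),
          Multiset.replicate (E u a.val) (colr E g k b.val) := by
          refine Finset.sum_congr (by congr) ?_
          intro u hu
          rw [hcolor u (by convert hu)]
      _ = Multiset.replicate (reductE E (colr E g n) ρ b a) (colr E g k b.val) := by
          rw [sum_replicate_eq, hfilter]
          rfl

end Aux

/-- compressing a learning problem by a `d`-substitution yields an
equivalent learning problem: every GNN of at most `d` layers has the same total
loss on the original and the compressed problem. -/
theorem compressed_problem_equiv {V : Type*} [Fintype V] [DecidableEq V] {p q : ℕ}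
    (E : V → V → ℕ) (g : V → Fin p → ℝ) (T : Finset V)
    (loss : V → (Fin q → ℝ) → ℝ) (d : ℕ∞) (ρ : V → V)
    (hρ : IsSubstWith (colrE' E g d) ρ) (L : GNN p q) (hL : (L.depth : ℕ∞) ≤ d) :
    ∑ v ∈ T, loss v (L.apply E g v) =
      ∑ v ∈ T.attach.image (fun w => (⟨ρ w.val, w.val, rfl⟩ : RNodes ρ)),
        ∑ w ∈ T.filter (fun w => colrE' E g d w = colrE' E g d v.val),
          loss w (L.apply (reductE E (colrE' E g d) ρ) (reductG g ρ) v) := by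
  classical
  have hρ' : IsSubstWith (colr E g (edepth E g d)) ρ := hρ
  have det : ∀ k ≤ L.depth, ∀ v w : V,
      colr E g (edepth E g d) v = colr E g (edepth E g d) w →
      colr E g k v = colr E g k w := by
    cases d with
    | top =>
      intro k _ v w
      rw [show edepth E g ⊤ = stableNum E g from rfl]
      exact stable_det (Nat.sInf_mem (exists_stableAt E g)) k v w
    | coe m =>
      intro k hk v w hvw
      have hdep : L.depth ≤ m := by exact_mod_cast hL
      rw [show edepth E g m = m from rfl] at hvw
      exact colr_le _ k (le_trans hk hdep) hvw
  have hred := reduct_colr hρ' det L.depth le_rfl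
  have happly : ∀ u w : V, colr E g (edepth E g d) w = colr E g (edepth E g d) (ρ u) →
      L.apply E g w =
        L.apply (reductE E (colr E g (edepth E g d)) ρ) (reductG g ρ)
          (⟨ρ u, u, rfl⟩ : RNodes ρ) := by
    intro u w hw
    apply gnn_apply_eq
    rw [hred ⟨ρ u, u, rfl⟩]
    exact det L.depth le_rfl w (ρ u) hw
  show ∑ v ∈ T, loss v (L.apply E g v) =
      ∑ v ∈ T.attach.image (fun w => (⟨ρ w.val, w.val, rfl⟩ : RNodes ρ)),
        ∑ w ∈ T.filter (fun w => colr E g (edepth E g d) w = colr E g (edepth E g d) v.val),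
          loss w (L.apply (reductE E (colr E g (edepth E g d)) ρ) (reductG g ρ) v)
  rw [eq_comm]
  rw [← Finset.sum_fiberwise_of_maps_to
      (t := T.attach.image (fun w => (⟨ρ w.val, w.val, rfl⟩ : RNodes ρ)))
      (g := fun u : V => (⟨ρ u, u, rfl⟩ : RNodes ρ))
      (fun u hu => Finset.mem_image.2 ⟨⟨u, hu⟩, Finset.mem_attach _ _, rfl⟩)
      (fun w => loss w (L.apply E g w))]
  apply Finset.sum_congr rfl
  intro v hv
  have hset : T.filter (fun w => colr E g (edepth E g d) w = colr E g (edepth E g d) v.val)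
      = T.filter (fun w => (⟨ρ w, w, rfl⟩ : RNodes ρ) = v) := by
    apply Finset.filter_congr
    intro w _
    exact (subst_fiber hρ' v w).symm
  rw [hset]
  apply Finset.sum_congr rfl
  intro w hw
  rw [Finset.mem_filter] at hw
  rw [← hw.2, ← happly w w (hρ'.1 w).symm]
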